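/- arXiv:2206.02907 — 2 statements merged into one kernel-verified Lean document; each statement's English description precedes it below -/
import Mathlib

section
/- Let ℍ be the real quaternions with real inner product ⟪u,v⟫ = Re(u · star v), and let e : Fin 4 → ℍ be the standard basis e = (1, i, j, k). If ψ : Fin 4 → ℍ satisfies Σ_{α} e_α · ψ_α = 0 (quaternion multiplication), then for every φ ∈ ℍ one has Σ_{α} ⟪star(e_α) · φ, ψ_α⟫ = 0. (That is, the image of the embedding ι(φ) = (¼ star(e_α) · φ)_α is orthogonal to the kernel of the Clifford contraction ψ ↦ Σ e_α ψ_α.) -/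
open scoped RealInnerProductSpace

/-- The standard basis `(1, i, j, k)` of the quaternions. -/
noncomputable def quatBasis : Fin 4 → Quaternion ℝ :=
  ![1, ⟨0, 1, 0, 0⟩, ⟨0, 0, 1, 0⟩, ⟨0, 0, 0, 1⟩]

lemma re_mul_comm (a b : Quaternion ℝ) : (a * b).re = (b * a).re := by
  simp only [Quaternion.re_mul]; ring

lemma re_sum {n : ℕ} (f : Fin n → Quaternion ℝ) :
    (∑ α, f α).re = ∑ α, (f α).re := by
  induction (Finset.univ : Finset (Fin n)) using Finset.induction with
  | empty => simp; rfl
  | insert a s h ih => simp [Finset.sum_insert h, ih]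

/-- If `ψ : Fin 4 → ℍ` lies in the kernel of the Clifford contraction
`ψ ↦ Σ_α e_α · ψ_α`, then for every `φ ∈ ℍ` the tuple `(star(e_α) · φ)_α` is orthogonal
to `ψ`: `Σ_α ⟪star(e_α) · φ, ψ_α⟫ = 0`. -/
theorem orthogonal_iota_ker_clifford
    (ψ : Fin 4 → Quaternion ℝ) (hψ : ∑ α, quatBasis α * ψ α = 0)
    (φ : Quaternion ℝ) :
    ∑ α, ⟪star (quatBasis α) * φ, ψ α⟫ = 0 := by
  have h : ∀ α, ⟪star (quatBasis α) * φ, ψ α⟫ = (φ * star (quatBasis α * ψ α)).re := by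
    intro α
    rw [Quaternion.inner_def, mul_assoc, re_mul_comm, star_mul, mul_assoc]
  rw [Finset.sum_congr rfl fun α _ => h α, ← re_sum, ← Finset.mul_sum, ← star_sum, hψ]
  simp; rfl
end

section
/- Let ℍ be the real quaternions, e : Fin 4 → ℍ the standard basis (1, i, j, k), and ε : Fin 4 → ℝ the signs (1, −1, 1, −1) (so that j · e_α · j⁻¹ = ε_α · e_α). For φ : Fin 4 → ℍ define ρ(φ) = −Σ_{α} star(e_α) · φ_α ∈ ℍ and the projection P(φ) : Fin 4 → ℍ by P(φ)_α = φ_α + ¼ · e_α · ρ(φ). Define the action of j by (j•φ)_α = ε_α · (j · φ_α · j⁻¹). Then P(j•φ)_α = ε_α · (j · P(φ)_α · j⁻¹) for all α ∈ Fin 4; that is, the projection P onto the 3/2-spinor part commutes with the action of j (Pin(2)-equivariance of π⁻). -/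
/-- The signs `(1, −1, 1, −1)`, so that `j · e_α · j⁻¹ = ε_α · e_α`. -/
noncomputable def quatSigns : Fin 4 → ℝ := ![1, -1, 1, -1]

/-- The Clifford contraction `ρ(φ) = −Σ_α star(e_α) · φ_α`. -/
noncomputable def rhoContr (φ : Fin 4 → Quaternion ℝ) : Quaternion ℝ :=
  -∑ α, star (quatBasis α) * φ α

/-- The projection onto the `3/2`-spinor part, `P(φ)_α = φ_α + ¼ e_α · ρ(φ)`. -/
noncomputable def projThreeHalf (φ : Fin 4 → Quaternion ℝ) : Fin 4 → Quaternion ℝ :=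
  fun α => φ α + (1 / 4 : ℝ) • (quatBasis α * rhoContr φ)

/-- The quaternion unit `j`. -/
noncomputable def quatJ : Quaternion ℝ := ⟨0, 0, 1, 0⟩


lemma quatJ_inv : quatJ⁻¹ = -quatJ := by
  apply inv_eq_of_mul_eq_one_right
  ext <;> simp [Quaternion.re_mul, Quaternion.imI_mul, Quaternion.imJ_mul,
    Quaternion.imK_mul] <;> simp [quatJ, Quaternion.re_one, Quaternion.imI_one, Quaternion.imJ_one, Quaternion.imK_one]

lemma key1 (β : Fin 4) (x : Quaternion ℝ) :
    star (quatBasis β) * (quatSigns β • (quatJ * x * quatJ⁻¹))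
      = quatJ * (star (quatBasis β) * x) * quatJ⁻¹ := by
  rw [quatJ_inv]
  fin_cases β <;>
    ext <;>
      simp [Quaternion.re_mul, Quaternion.imI_mul,
        Quaternion.imJ_mul, Quaternion.imK_mul] <;> simp [quatJ, quatBasis, quatSigns, QuaternionAlgebra.re_one, QuaternionAlgebra.imI_one, QuaternionAlgebra.imJ_one, QuaternionAlgebra.imK_one, Quaternion.re_one, Quaternion.imI_one, Quaternion.imJ_one, Quaternion.imK_one]

lemma key2 (α : Fin 4) (x : Quaternion ℝ) :
    quatBasis α * (quatJ * x * quatJ⁻¹)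
      = quatSigns α • (quatJ * (quatBasis α * x) * quatJ⁻¹) := by
  rw [quatJ_inv]
  fin_cases α <;>
    ext <;>
      simp [Quaternion.re_mul, Quaternion.imI_mul,
        Quaternion.imJ_mul, Quaternion.imK_mul] <;> simp [quatJ, quatBasis, quatSigns, QuaternionAlgebra.re_one, QuaternionAlgebra.imI_one, QuaternionAlgebra.imJ_one, QuaternionAlgebra.imK_one, Quaternion.re_one, Quaternion.imI_one, Quaternion.imJ_one, Quaternion.imK_one]

lemma rho_equiv (φ : Fin 4 → Quaternion ℝ) :
    rhoContr (fun β => quatSigns β • (quatJ * φ β * quatJ⁻¹))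
      = quatJ * rhoContr φ * quatJ⁻¹ := by
  unfold rhoContr
  rw [Fin.sum_univ_four, Fin.sum_univ_four, key1, key1, key1, key1]
  noncomm_ring

/-- `Pin(2)`-equivariance of the projection `π⁻` onto the `3/2`-spinors: the projection `P`
commutes with the action of `j`, given by `(j • φ)_α = ε_α · (j · φ_α · j⁻¹)`. -/
theorem projThreeHalf_j_equivariant (φ : Fin 4 → Quaternion ℝ) (α : Fin 4) :
    projThreeHalf (fun β => quatSigns β • (quatJ * φ β * quatJ⁻¹)) α
      = quatSigns α • (quatJ * projThreeHalf φ α * quatJ⁻¹) := by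
  unfold projThreeHalf
  rw [rho_equiv, key2, mul_add, add_mul, smul_add, smul_comm]
  congr 2
  rw [Algebra.mul_smul_comm, Algebra.smul_mul_assoc]
end
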